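/- Let λ, μ ∈ ℝ and let A : h_0 × F_λ → F_μ be a nonzero sl(2)-invariant bilinear differential operator. Then μ = λ + k − 1/2 for some non-negative integer k satisfying k(k−1)(2λ+k−1)(2λ+k−2) = 0, and, up to a scalar factor, A(h,f) = h f^{(k)} + k(2λ+k−1) h' f^{(k−1)}. -/

import Mathlib

noncomputable section
open Function
open scoped ContDiff

/-- The subalgebra of smooth functions `ℝ → ℝ`. -/
def SmoothFn : Subalgebra ℝ (ℝ → ℝ) where
  carrier := {f | ContDiff ℝ ∞ f}
  mul_mem' := fun {a b} (hf : ContDiff ℝ ∞ a) (hg : ContDiff ℝ ∞ b) => hf.mul hg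
  add_mem' := fun {a b} (hf : ContDiff ℝ ∞ a) (hg : ContDiff ℝ ∞ b) => hf.add hg
  algebraMap_mem' := fun c => (contDiff_const : ContDiff ℝ ∞ (fun _ : ℝ => c))

/-- The type of smooth functions `ℝ → ℝ`, i.e. `C^∞(ℝ)`; for `λ ∈ ℝ` it also serves as
the space `F_λ` of `λ`-densities `f (dx)^λ`. -/
abbrev SF : Type := SmoothFn

theorem mem_SmoothFn {f : ℝ → ℝ} : f ∈ SmoothFn ↔ ContDiff ℝ ∞ f := ⟨fun h => h, fun h => h⟩

/-- The derivative, as an operation on smooth functions. -/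
def sderiv (f : SF) : SF :=
  ⟨deriv (f : ℝ → ℝ), mem_SmoothFn.mpr (contDiff_infty_iff_deriv.mp (mem_SmoothFn.mp f.2)).2⟩

/-- The function `x` as a smooth function. -/
def cx : SF := ⟨id, mem_SmoothFn.mpr contDiff_id⟩

/-- The Lie derivative `L^λ_{X_g}(f) = g f′ + λ f g′` of the vector field `X_g = g d/dx`
acting on `λ`-densities. -/
def Lc (lam : ℝ) (g f : SF) : SF := g * sderiv f + lam • (sderiv g * f)

/-- The generators `1, x, x²` of `sl(2) ⊂ Vect(ℝ)` (identifying `X_g ↔ g`). -/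
def sl2set : Set SF := {1, cx, cx * cx}

/-- `h₀ ⊂ F_{−1/2}`: the span of `x (dx)^{−1/2}` and `(dx)^{−1/2}`. -/
def h0sub : Submodule ℝ SF := Submodule.span ℝ {cx, 1}

/-- `h₁ ⊂ F_0`: the span of the constant function `1`. -/
def h1sub : Submodule ℝ SF := Submodule.span ℝ {1}

/-- A bilinear differential operator `h₀ × F_λ → F_μ`:
`A(h,f) = Σ_{i,j} a_{i,j} h^{(i)} f^{(j)}` with smooth coefficients. -/
def IsBilinDiffOp0 (A : h0sub → SF → SF) : Prop :=
  ∃ (N : ℕ) (a : Fin (N + 1) → Fin (N + 1) → SF),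
    ∀ (h : h0sub) (f : SF),
      A h f = ∑ i : Fin (N + 1), ∑ j : Fin (N + 1),
        a i j * (sderiv^[(i : ℕ)] h.1 * sderiv^[(j : ℕ)] f)

/-- A bilinear differential operator `h₁ × F_λ → F_μ`. -/
def IsBilinDiffOp1 (B : h1sub → SF → SF) : Prop :=
  ∃ (N : ℕ) (a : Fin (N + 1) → Fin (N + 1) → SF),
    ∀ (h : h1sub) (f : SF),
      B h f = ∑ i : Fin (N + 1), ∑ j : Fin (N + 1),
        a i j * (sderiv^[(i : ℕ)] h.1 * sderiv^[(j : ℕ)] f)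

namespace SL2

lemma sm (f : SF) : ContDiff ℝ ∞ (f : ℝ → ℝ) := f.2

lemma df (f : SF) : Differentiable ℝ (f : ℝ → ℝ) :=
  (sm f).differentiable (by norm_num)

lemma SFext {f g : SF} (h : ∀ t, (f : ℝ → ℝ) t = (g : ℝ → ℝ) t) : f = g :=
  Subtype.ext (funext h)

@[simp] lemma coe_add (f g : SF) : ((f + g : SF) : ℝ → ℝ) = (f : ℝ → ℝ) + (g : ℝ → ℝ) := rfl
@[simp] lemma coe_mul (f g : SF) : ((f * g : SF) : ℝ → ℝ) = (f : ℝ → ℝ) * (g : ℝ → ℝ) := rfl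
@[simp] lemma coe_smul (c : ℝ) (f : SF) : ((c • f : SF) : ℝ → ℝ) = c • (f : ℝ → ℝ) := rfl
@[simp] lemma coe_one : ((1 : SF) : ℝ → ℝ) = fun _ => 1 := rfl
@[simp] lemma coe_zero : ((0 : SF) : ℝ → ℝ) = fun _ => 0 := rfl
@[simp] lemma coe_cx : ((cx : SF) : ℝ → ℝ) = id := rfl
@[simp] lemma coe_sderiv (f : SF) : ((sderiv f : SF) : ℝ → ℝ) = deriv (f : ℝ → ℝ) := rfl

lemma coe_sum {s : Finset ℕ} {F : ℕ → SF} :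
    ((∑ j ∈ s, F j : SF) : ℝ → ℝ) = fun t => ∑ j ∈ s, (F j : ℝ → ℝ) t := by
  funext t
  change (SmoothFn.val (∑ j ∈ s, F j)) t = _
  rw [map_sum]
  simp [Finset.sum_apply]

lemma sderiv_add (f g : SF) : sderiv (f + g) = sderiv f + sderiv g := by
  apply SFext; intro t
  simp only [coe_sderiv, coe_add]
  rw [show ((f : ℝ → ℝ) + (g : ℝ → ℝ)) = fun x => (f : ℝ → ℝ) x + (g : ℝ → ℝ) x from rfl]
  rw [deriv_fun_add (df f t) (df g t)]; rfl

lemma sderiv_smul (c : ℝ) (f : SF) : sderiv (c • f) = c • sderiv f := by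
  apply SFext; intro t
  simp only [coe_sderiv, coe_smul]
  rw [show (c • (f : ℝ → ℝ)) = fun x => c * (f : ℝ → ℝ) x from rfl]
  rw [deriv_const_mul _ (df f t)]; rfl

lemma sderiv_mul (f g : SF) : sderiv (f * g) = sderiv f * g + f * sderiv g := by
  apply SFext; intro t
  simp only [coe_sderiv, coe_mul, coe_add]
  rw [show ((f : ℝ → ℝ) * (g : ℝ → ℝ)) = fun x => (f : ℝ → ℝ) x * (g : ℝ → ℝ) x from rfl]
  rw [deriv_fun_mul (df f t) (df g t)]; rfl

@[simp] lemma sderiv_one : sderiv (1 : SF) = 0 := by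
  apply SFext; intro t
  simp only [coe_sderiv, coe_one, coe_zero]
  exact deriv_const t 1

@[simp] lemma sderiv_zero : sderiv (0 : SF) = 0 := by
  apply SFext; intro t
  simp only [coe_sderiv, coe_zero]
  exact deriv_const t 0

@[simp] lemma sderiv_cx : sderiv cx = 1 := by
  apply SFext; intro t
  simp only [coe_sderiv, coe_cx, coe_one, deriv_id']

end SL2
namespace SL2

/-- `(· - t)^m` as a smooth function. -/
def e (m : ℕ) (t : ℝ) : SF :=
  ⟨fun y => (y - t) ^ m, mem_SmoothFn.mpr (((contDiff_id (𝕜 := ℝ)).sub contDiff_const).pow m)⟩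

@[simp] lemma coe_e (m : ℕ) (t : ℝ) : ((e m t : SF) : ℝ → ℝ) = fun y => (y - t) ^ m := rfl

lemma sderiv_e (m : ℕ) (t : ℝ) : sderiv (e m t) = (m : ℝ) • e (m - 1) t := by
  apply SFext; intro y
  simp only [coe_sderiv, coe_e, coe_smul, Pi.smul_apply, smul_eq_mul]
  have h : HasDerivAt (fun y : ℝ => (y - t) ^ m) ((m : ℝ) * (y - t) ^ (m - 1) * 1) y :=
    ((hasDerivAt_id y).sub_const t).pow m
  rw [h.deriv]; ring

lemma sderiv_iter_smul (c : ℝ) (f : SF) (j : ℕ) :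
    sderiv^[j] (c • f) = c • sderiv^[j] f := by
  induction j with
  | zero => simp
  | succ n ih =>
    rw [Function.iterate_succ_apply', Function.iterate_succ_apply', ih, sderiv_smul]

lemma sderiv_iter_add (f g : SF) (j : ℕ) :
    sderiv^[j] (f + g) = sderiv^[j] f + sderiv^[j] g := by
  induction j with
  | zero => simp
  | succ n ih =>
    rw [Function.iterate_succ_apply', Function.iterate_succ_apply',
      Function.iterate_succ_apply', ih, sderiv_add]

lemma sderiv_iter_zero (j : ℕ) : sderiv^[j] (0 : SF) = 0 := by
  induction j with
  | zero => simp
  | succ n ih => rw [Function.iterate_succ_apply', ih, sderiv_zero]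

lemma sderiv_iter_e_at (j m : ℕ) (t : ℝ) :
    ((sderiv^[j] (e m t) : SF) : ℝ → ℝ) t = if j = m then (m.factorial : ℝ) else 0 := by
  induction j generalizing m with
  | zero =>
    simp only [Function.iterate_zero, id_eq, coe_e]
    rcases eq_or_ne 0 m with h | h
    · subst h; simp
    · simp [if_neg h, zero_pow (by omega : m ≠ 0), sub_self]
  | succ n ih =>
    rw [Function.iterate_succ_apply, sderiv_e, sderiv_iter_smul]
    simp only [coe_smul, Pi.smul_apply, smul_eq_mul, ih (m-1)]
    rcases eq_or_ne (n+1) m with h | h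
    · rw [if_pos h, if_pos (by omega)]
      subst h
      have : (n + 1) - 1 = n := by omega
      rw [this, Nat.factorial_succ]
      push_cast; ring
    · rw [if_neg h]
      rcases eq_or_ne m 0 with h0 | h0
      · subst h0; simp
      · rw [if_neg (by omega)]; ring

end SL2
namespace SL2

lemma mem_pair (α β : ℝ) : α • cx + β • (1 : SF) ∈ h0sub :=
  Submodule.mem_span_pair.mpr ⟨α, β, rfl⟩

lemma cx_mem : cx ∈ h0sub := by
  have := mem_pair 1 0; simpa using this

lemma one_mem : (1 : SF) ∈ h0sub := by
  have := mem_pair 0 1; simpa using this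

lemma h0_repr {h : SF} (hh : h ∈ h0sub) : ∃ α β : ℝ, h = α • cx + β • (1 : SF) := by
  obtain ⟨a, b, hab⟩ := Submodule.mem_span_pair.mp hh
  exact ⟨a, b, hab.symm⟩

lemma h0_sderiv (α β : ℝ) : sderiv (α • cx + β • (1 : SF)) = α • (1 : SF) := by
  rw [sderiv_add, sderiv_smul, sderiv_smul, sderiv_cx, sderiv_one, smul_zero, add_zero]

lemma h0_sderiv2 (α β : ℝ) : sderiv (sderiv (α • cx + β • (1 : SF))) = 0 := by
  rw [h0_sderiv, sderiv_smul, sderiv_one, smul_zero]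

lemma Lc_one (l : ℝ) (f : SF) : Lc l 1 f = sderiv f := by
  unfold Lc
  rw [sderiv_one, one_mul, zero_mul, smul_zero, add_zero]

lemma sderiv_xx : sderiv (cx * cx) = cx + cx := by
  rw [sderiv_mul, sderiv_cx, one_mul, mul_one]

lemma Lc_cx_h (α β : ℝ) :
    Lc (-(1 : ℝ)/2) cx (α • cx + β • (1 : SF)) = (α/2) • cx + (-(β/2)) • (1 : SF) := by
  unfold Lc
  rw [h0_sderiv, sderiv_cx, one_mul]
  apply SFext; intro y
  simp only [coe_add, coe_mul, coe_smul, coe_cx, coe_one, Pi.add_apply, Pi.mul_apply,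
    Pi.smul_apply, smul_eq_mul, id_eq]
  ring

lemma Lc_xx_h (α β : ℝ) :
    Lc (-(1 : ℝ)/2) (cx * cx) (α • cx + β • (1 : SF)) = (-β) • cx := by
  unfold Lc
  rw [h0_sderiv, sderiv_xx]
  apply SFext; intro y
  simp only [coe_add, coe_mul, coe_smul, coe_cx, coe_one, Pi.add_apply, Pi.mul_apply,
    Pi.smul_apply, smul_eq_mul, id_eq]
  ring

lemma Lc_cx_e (l : ℝ) (m : ℕ) (t : ℝ) :
    Lc l cx (e m t) = ((m : ℝ) + l) • e m t + ((m : ℝ) * t) • e (m - 1) t := by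
  unfold Lc
  rw [sderiv_cx, sderiv_e, one_mul]
  apply SFext; intro y
  simp only [coe_add, coe_mul, coe_smul, coe_cx, coe_e, Pi.add_apply, Pi.mul_apply,
    Pi.smul_apply, smul_eq_mul, id_eq]
  cases m with
  | zero => simp
  | succ n =>
    have : n + 1 - 1 = n := by omega
    rw [this, pow_succ]
    push_cast; ring

lemma Lc_xx_e (l : ℝ) (m : ℕ) (t : ℝ) :
    Lc l (cx * cx) (e m t) = ((m : ℝ) + 2*l) • e (m+1) t + (2*t*((m : ℝ) + l)) • e m t
      + ((m : ℝ) * t^2) • e (m - 1) t := by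
  unfold Lc
  rw [sderiv_xx, sderiv_e]
  apply SFext; intro y
  simp only [coe_add, coe_mul, coe_smul, coe_cx, coe_e, Pi.add_apply, Pi.mul_apply,
    Pi.smul_apply, smul_eq_mul, id_eq]
  cases m with
  | zero => simp; ring
  | succ n =>
    have : n + 1 - 1 = n := by omega
    rw [this, pow_succ, pow_succ, pow_succ]
    push_cast; ring

end SL2
namespace SL2
open Finset

lemma h0_iter {h : SF} (hh : h ∈ h0sub) {i : ℕ} (hi : 2 ≤ i) : sderiv^[i] h = 0 := by
  obtain ⟨α, β, rfl⟩ := h0_repr hh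
  have h2 : sderiv^[2] (α • cx + β • (1 : SF)) = 0 := h0_sderiv2 α β
  have : i = (i - 2) + 2 := by omega
  rw [this, Function.iterate_add_apply, h2, sderiv_iter_zero]

set_option maxHeartbeats 1000000 in
lemma normal_form {A : h0sub → SF → SF} (hdiff : IsBilinDiffOp0 A) :
    ∃ M : ℕ, 2 ≤ M ∧ ∃ p q : ℕ → SF, (∀ j, M ≤ j → p j = 0 ∧ q j = 0) ∧
      ∀ (h : h0sub) (f : SF), A h f =
        ∑ j ∈ range M,
          (p j * (h.1 * sderiv^[j] f) + q j * (sderiv h.1 * sderiv^[j] f)) := by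
  obtain ⟨N, a, ha⟩ := hdiff
  set ae : ℕ → ℕ → SF := fun i j =>
    if hi : i < N + 1 then (if hj : j < N + 1 then a ⟨i, hi⟩ ⟨j, hj⟩ else 0) else 0 with hae
  refine ⟨N + 2, by omega, fun j => ae 0 j, fun j => ae 1 j, ?_, ?_⟩
  · intro j hj
    constructor
    · simp only [hae]
      rw [dif_pos (show 0 < N + 1 by omega), dif_neg (show ¬ j < N + 1 by omega)]
    · simp only [hae]
      by_cases h1 : 1 < N + 1
      · rw [dif_pos h1, dif_neg (show ¬ j < N + 1 by omega)]
      · rw [dif_neg h1]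
  intro h f
  have key : A h f = ∑ i ∈ range (N+1), ∑ j ∈ range (N+1),
      ae i j * (sderiv^[i] h.1 * sderiv^[j] f) := by
    rw [ha]
    calc ∑ i : Fin (N+1), ∑ j : Fin (N+1),
          a i j * (sderiv^[(i:ℕ)] h.1 * sderiv^[(j:ℕ)] f)
        = ∑ i : Fin (N+1), ∑ j ∈ range (N+1),
            ae (i:ℕ) j * (sderiv^[(i:ℕ)] h.1 * sderiv^[j] f) := by
          refine Finset.sum_congr rfl fun i _ => ?_
          rw [← Fin.sum_univ_eq_sum_range
            (fun j => ae (i:ℕ) j * (sderiv^[(i:ℕ)] h.1 * sderiv^[j] f)) (N+1)]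
          refine Finset.sum_congr rfl fun j _ => ?_
          simp only [hae]
          rw [dif_pos i.isLt, dif_pos j.isLt]
      _ = ∑ i ∈ range (N+1), ∑ j ∈ range (N+1),
            ae i j * (sderiv^[i] h.1 * sderiv^[j] f) :=
          Fin.sum_univ_eq_sum_range
            (fun i => ∑ j ∈ range (N+1), ae i j * (sderiv^[i] h.1 * sderiv^[j] f)) (N+1)
  have inner_ext : ∀ i, ∑ j ∈ range (N+1), ae i j * (sderiv^[i] h.1 * sderiv^[j] f)
      = ∑ j ∈ range (N+2), ae i j * (sderiv^[i] h.1 * sderiv^[j] f) := by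
    intro i
    refine Finset.sum_subset (range_subset_range.mpr (by omega)) fun j _ hj => ?_
    have : ae i j = 0 := by
      simp only [hae]
      by_cases hi : i < N + 1
      · rw [dif_pos hi, dif_neg (by simp at hj; omega)]
      · rw [dif_neg hi]
    rw [this, zero_mul]
  have key2 : A h f = ∑ i ∈ range (N+2), ∑ j ∈ range (N+2),
      ae i j * (sderiv^[i] h.1 * sderiv^[j] f) := by
    rw [key]
    rw [Finset.sum_congr rfl fun i _ => inner_ext i]
    refine Finset.sum_subset (range_subset_range.mpr (by omega)) fun i _ hi => ?_
    refine Finset.sum_eq_zero fun j _ => ?_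
    have : ae i j = 0 := by
      simp only [hae]; rw [dif_neg (by simp at hi; omega)]
    rw [this, zero_mul]
  rw [key2]
  have drop : ∑ i ∈ range (N+2), ∑ j ∈ range (N+2),
      ae i j * (sderiv^[i] h.1 * sderiv^[j] f)
      = ∑ i ∈ range 2, ∑ j ∈ range (N+2), ae i j * (sderiv^[i] h.1 * sderiv^[j] f) := by
    symm
    refine Finset.sum_subset (range_subset_range.mpr (by omega)) fun i _ hi => ?_
    refine Finset.sum_eq_zero fun j _ => ?_
    have : sderiv^[i] h.1 = 0 := h0_iter h.2 (by simp at hi; omega)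
    rw [this, zero_mul, mul_zero]
  rw [drop, Finset.sum_range_succ, Finset.sum_range_one, ← Finset.sum_add_distrib]
  simp only [Function.iterate_zero, id_eq, Function.iterate_one]

end SL2
namespace SL2
open Finset

lemma sderiv_sum {s : Finset ℕ} {F : ℕ → SF} :
    sderiv (∑ j ∈ s, F j) = ∑ j ∈ s, sderiv (F j) := by
  classical
  induction s using Finset.induction with
  | empty => simp
  | insert _ _ hx ih => rw [Finset.sum_insert hx, Finset.sum_insert hx, sderiv_add, ih]

/-- Evaluation of the normal form at the center of a shifted monomial. -/
lemma eval_pq {M : ℕ} {p q : ℕ → SF} (hsupp : ∀ j, M ≤ j → p j = 0 ∧ q j = 0)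
    (u v : SF) (m : ℕ) (t : ℝ) :
    ((∑ j ∈ range M,
        (p j * (u * sderiv^[j] (e m t)) + q j * (v * sderiv^[j] (e m t))) : SF) : ℝ → ℝ) t
      = (m.factorial : ℝ) * (((p m : SF) : ℝ → ℝ) t * (u : ℝ → ℝ) t
          + ((q m : SF) : ℝ → ℝ) t * (v : ℝ → ℝ) t) := by
  rw [coe_sum]
  simp only [coe_add, coe_mul, Pi.add_apply, Pi.mul_apply, sderiv_iter_e_at,
    mul_ite, mul_zero, ite_add_ite, add_zero]
  rw [Finset.sum_ite_eq' (range M) m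
    (fun j => ((p j : SF) : ℝ → ℝ) t * ((u : ℝ → ℝ) t * (m.factorial : ℝ))
      + ((q j : SF) : ℝ → ℝ) t * ((v : ℝ → ℝ) t * (m.factorial : ℝ)))]
  by_cases hm : m ∈ range M
  · rw [if_pos hm]; ring
  · rw [if_neg hm]
    obtain ⟨hp, hq⟩ := hsupp m (by simpa using hm)
    rw [hp, hq, coe_zero]
    ring

end SL2
namespace SL2
open Finset
set_option maxHeartbeats 2000000

lemma sderiv_mem {h : SF} (hh : h ∈ h0sub) : sderiv h ∈ h0sub := by
  obtain ⟨α, β, rfl⟩ := h0_repr hh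
  rw [h0_sderiv]
  exact Submodule.smul_mem _ _ one_mem

lemma h0_dd {h : h0sub} : sderiv (sderiv h.1) = 0 := by
  obtain ⟨α, β, hr⟩ := h0_repr h.2
  rw [hr]; exact h0_sderiv2 α β

section ops
variable {A : h0sub → SF → SF} {M : ℕ} {p q : ℕ → SF}

lemma A_add
    (hform : ∀ (h : h0sub) (f : SF), A h f = ∑ j ∈ range M,
      (p j * (h.1 * sderiv^[j] f) + q j * (sderiv h.1 * sderiv^[j] f)))
    (h : h0sub) (f g : SF) : A h (f + g) = A h f + A h g := by
  rw [hform, hform, hform, ← Finset.sum_add_distrib]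
  refine sum_congr rfl fun j _ => ?_
  rw [sderiv_iter_add]; ring

lemma A_smul
    (hform : ∀ (h : h0sub) (f : SF), A h f = ∑ j ∈ range M,
      (p j * (h.1 * sderiv^[j] f) + q j * (sderiv h.1 * sderiv^[j] f)))
    (h : h0sub) (c : ℝ) (f : SF) : A h (c • f) = c • A h f := by
  rw [hform, hform, Finset.smul_sum]
  refine sum_congr rfl fun j _ => ?_
  rw [sderiv_iter_smul]
  simp only [Algebra.smul_def]
  ring

lemma eval_A
    (hsupp : ∀ j, M ≤ j → p j = 0 ∧ q j = 0)
    (hform : ∀ (h : h0sub) (f : SF), A h f = ∑ j ∈ range M,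
      (p j * (h.1 * sderiv^[j] f) + q j * (sderiv h.1 * sderiv^[j] f)))
    (h : h0sub) (m : ℕ) (t : ℝ) :
    ((A h (e m t) : SF) : ℝ → ℝ) t
      = (m.factorial : ℝ) * (((p m : SF) : ℝ → ℝ) t * (h.1 : ℝ → ℝ) t
          + ((q m : SF) : ℝ → ℝ) t * ((sderiv h.1 : SF) : ℝ → ℝ) t) := by
  rw [hform]
  exact eval_pq hsupp _ _ m t

lemma resid
    (hsupp : ∀ j, M ≤ j → p j = 0 ∧ q j = 0)
    (hform : ∀ (h : h0sub) (f : SF), A h f = ∑ j ∈ range M,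
      (p j * (h.1 * sderiv^[j] f) + q j * (sderiv h.1 * sderiv^[j] f)))
    (hC1 : ∀ (h : h0sub) (f : SF),
      sderiv (A h f) = A ⟨sderiv h.1, sderiv_mem h.2⟩ f + A h (sderiv f)) :
    ∀ (j : ℕ) (t : ℝ),
      ((sderiv (p j) : SF) : ℝ → ℝ) t = 0 ∧ ((sderiv (q j) : SF) : ℝ → ℝ) t = 0 := by
  have hsupp' : ∀ j, M ≤ j → sderiv (p j) = 0 ∧ sderiv (q j) = 0 := by
    intro j hj
    rw [(hsupp j hj).1, (hsupp j hj).2]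
    exact ⟨sderiv_zero, sderiv_zero⟩
  have key : ∀ (h : h0sub) (f : SF),
      ∑ j ∈ range M, (sderiv (p j) * (h.1 * sderiv^[j] f)
        + sderiv (q j) * (sderiv h.1 * sderiv^[j] f)) = 0 := by
    intro h f
    have hit : ∀ j : ℕ, sderiv^[j] (sderiv f) = sderiv (sderiv^[j] f) := fun j => by
      rw [← Function.iterate_succ_apply, Function.iterate_succ_apply']
    have e1 := hC1 h f
    rw [hform h f, sderiv_sum, hform ⟨sderiv h.1, sderiv_mem h.2⟩ f, hform h (sderiv f),
      ← Finset.sum_add_distrib] at e1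
    have e2 : ∑ j ∈ range M, (sderiv (p j) * (h.1 * sderiv^[j] f)
        + sderiv (q j) * (sderiv h.1 * sderiv^[j] f))
      = (∑ j ∈ range M, sderiv (p j * (h.1 * sderiv^[j] f)
            + q j * (sderiv h.1 * sderiv^[j] f)))
        - ∑ j ∈ range M,
            ((p j * ((⟨sderiv h.1, sderiv_mem h.2⟩ : h0sub).1 * sderiv^[j] f)
              + q j * (sderiv (⟨sderiv h.1, sderiv_mem h.2⟩ : h0sub).1 * sderiv^[j] f))
            + (p j * (h.1 * sderiv^[j] (sderiv f))
              + q j * (sderiv h.1 * sderiv^[j] (sderiv f)))) := by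
      rw [← Finset.sum_sub_distrib]
      refine sum_congr rfl fun j _ => ?_
      simp only
      rw [sderiv_add, sderiv_mul, sderiv_mul, sderiv_mul, sderiv_mul, h0_dd (h := h), hit j]
      ring
    rw [e2, e1, sub_self]
  have keyv : ∀ (h : h0sub) (m : ℕ) (t : ℝ),
      (m.factorial : ℝ) * (((sderiv (p m) : SF) : ℝ → ℝ) t * (h.1 : ℝ → ℝ) t
        + ((sderiv (q m) : SF) : ℝ → ℝ) t * ((sderiv h.1 : SF) : ℝ → ℝ) t) = 0 := by
    intro h m t
    rw [← eval_pq hsupp' h.1 (sderiv h.1) m t, key h (e m t), coe_zero]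
  intro j t
  have fne : (j.factorial : ℝ) ≠ 0 := Nat.cast_ne_zero.mpr j.factorial_ne_zero
  have k1 := keyv ⟨1, one_mem⟩ j t
  simp only [Submodule.coe_mk, sderiv_one, coe_one, coe_zero, mul_one, mul_zero, add_zero] at k1
  have hp : ((sderiv (p j) : SF) : ℝ → ℝ) t = 0 := (mul_eq_zero.mp k1).resolve_left fne
  have k2 := keyv ⟨cx, cx_mem⟩ j t
  simp only [Submodule.coe_mk, sderiv_cx, coe_cx, coe_one, id_eq, mul_one] at k2
  have k3 : ((sderiv (p j) : SF) : ℝ → ℝ) t * t + ((sderiv (q j) : SF) : ℝ → ℝ) t = 0 :=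
    (mul_eq_zero.mp k2).resolve_left fne
  rw [hp, zero_mul, zero_add] at k3
  exact ⟨hp, k3⟩

end ops
end SL2

open SL2 Finset
set_option maxHeartbeats 4000000

/-- Classification of nonzero `sl(2)`-invariant bilinear differential operators
`A : h₀ × F_λ → F_μ`: necessarily `μ = λ + k − 1/2` with `k ∈ ℕ` satisfying
`k(k−1)(2λ+k−1)(2λ+k−2) = 0`, and up to a scalar factor
`A(h,f) = h f^{(k)} + k(2λ+k−1) h′ f^{(k−1)}`. -/
theorem sl2_invariant_operators_h0 (lam mu : ℝ) (A : h0sub → SF → SF)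
    (hdiff : IsBilinDiffOp0 A)
    (hinv : ∀ g ∈ sl2set, ∀ (h : h0sub) (hm : Lc (-(1 : ℝ) / 2) g h.1 ∈ h0sub) (f : SF),
      Lc mu g (A h f) = A ⟨Lc (-(1 : ℝ) / 2) g h.1, hm⟩ f + A h (Lc lam g f))
    (hA : A ≠ 0) :
    ∃ k : ℕ, mu = lam + k - 1 / 2 ∧
      (k : ℝ) * ((k : ℝ) - 1) * (2 * lam + k - 1) * (2 * lam + k - 2) = 0 ∧
      ∃ c : ℝ, ∀ (h : h0sub) (f : SF),
        A h f = c • (h.1 * sderiv^[k] f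
          + ((k : ℝ) * (2 * lam + (k : ℝ) - 1)) • (sderiv h.1 * sderiv^[k - 1] f)) := by
  obtain ⟨M, hM2, p, q, hsupp, hform⟩ := normal_form hdiff
  have g1mem : (1 : SF) ∈ sl2set := by left; rfl
  have gxmem : cx ∈ sl2set := by right; left; rfl
  have gxxmem : cx * cx ∈ sl2set := by right; right; rfl
  -- step 1 : constancy of coefficients
  have hC1 : ∀ (h : h0sub) (f : SF),
      sderiv (A h f) = A ⟨sderiv h.1, sderiv_mem h.2⟩ f + A h (sderiv f) := by
    intro h f
    have hm : Lc (-(1 : ℝ)/2) 1 h.1 ∈ h0sub := by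
      rw [Lc_one]; exact sderiv_mem h.2
    have E := hinv 1 g1mem h hm f
    rw [show (⟨Lc (-(1 : ℝ)/2) 1 h.1, hm⟩ : h0sub) = ⟨sderiv h.1, sderiv_mem h.2⟩ from
      Subtype.ext (Lc_one _ _), Lc_one, Lc_one] at E
    exact E
  have hres := resid hsupp hform hC1
  have pconst : ∀ j t, ((p j : SF) : ℝ → ℝ) t = ((p j : SF) : ℝ → ℝ) 0 := fun j t =>
    is_const_of_deriv_eq_zero (df (p j)) (fun x => (hres j x).1) t 0
  have qconst : ∀ j t, ((q j : SF) : ℝ → ℝ) t = ((q j : SF) : ℝ → ℝ) 0 := fun j t =>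
    is_const_of_deriv_eq_zero (df (q j)) (fun x => (hres j x).2) t 0
  set P : ℕ → ℝ := fun j => ((p j : SF) : ℝ → ℝ) 0 with hP
  set Q : ℕ → ℝ := fun j => ((q j : SF) : ℝ → ℝ) 0 with hQ
  -- special Lc values
  have lcx1 : Lc (-(1 : ℝ)/2) cx (1 : SF) = (-(1/2) : ℝ) • (1 : SF) := by
    have := Lc_cx_h 0 1
    simp only [zero_smul, one_smul, zero_add, zero_div, neg_zero, add_zero] at this
    simpa using this
  have lcxx : Lc (-(1 : ℝ)/2) cx cx = ((1 : ℝ)/2) • cx := by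
    have := Lc_cx_h 1 0
    simp only [zero_smul, one_smul, zero_add, zero_div, neg_zero, add_zero] at this
    simpa using this
  have lxx1 : Lc (-(1 : ℝ)/2) (cx * cx) (1 : SF) = (-1 : ℝ) • cx := by
    have := Lc_xx_h 0 1
    simpa using this
  have lxxx : Lc (-(1 : ℝ)/2) (cx * cx) cx = (0 : ℝ) • cx := by
    have := Lc_xx_h 1 0
    simp only [zero_smul, one_smul, zero_add, add_zero, neg_zero] at this
    simpa using this
  -- LHS evaluation helpers
  have lcx_at : ∀ F : SF, ((Lc mu cx F : SF) : ℝ → ℝ) 0 = mu * (F : ℝ → ℝ) 0 := by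
    intro F
    simp [Lc, sderiv_cx]
  have lxx_at : ∀ F : SF, ((Lc mu (cx * cx) F : SF) : ℝ → ℝ) 0 = 0 := by
    intro F
    simp [Lc, sderiv_xx]
  -- the four structure equations
  have EI : ∀ m : ℕ, P m * (mu - (lam + m - 1/2)) = 0 := by
    intro m
    have hm : Lc (-(1 : ℝ)/2) cx ((⟨1, one_mem⟩ : h0sub) : SF) ∈ h0sub := by
      rw [show ((⟨1, one_mem⟩ : h0sub) : SF) = (1 : SF) from rfl, lcx1]
      exact Submodule.smul_mem _ _ one_mem
    have E := hinv cx gxmem ⟨1, one_mem⟩ hm (e m 0)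
    rw [show (⟨Lc (-(1 : ℝ)/2) cx ((⟨1, one_mem⟩ : h0sub) : SF), hm⟩ : h0sub)
        = ⟨(-(1/2) : ℝ) • (1 : SF), Submodule.smul_mem _ _ one_mem⟩ from
        Subtype.ext lcx1] at E
    rw [Lc_cx_e, A_add hform, A_smul hform, A_smul hform] at E
    have E0 := congrArg (fun z : SF => (z : ℝ → ℝ) 0) E
    simp only [lcx_at, coe_add, coe_smul, Pi.add_apply, Pi.smul_apply, smul_eq_mul] at E0
    rw [eval_A hsupp hform, eval_A hsupp hform, eval_A hsupp hform] at E0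
    simp only [show ((⟨1, one_mem⟩ : h0sub) : SF) = (1 : SF) from rfl,
      show ((⟨(-(1/2) : ℝ) • (1 : SF), Submodule.smul_mem _ _ one_mem⟩ : h0sub) : SF)
        = (-(1/2) : ℝ) • (1 : SF) from rfl,
      sderiv_one, sderiv_smul, smul_zero, coe_one, coe_zero, coe_smul, Pi.smul_apply,
      Pi.zero_apply, smul_eq_mul, mul_one, mul_zero, add_zero, zero_add] at E0
    have fne : (m.factorial : ℝ) ≠ 0 := Nat.cast_ne_zero.mpr m.factorial_ne_zero
    have goal2 : (m.factorial : ℝ) * (P m * (mu - (lam + m - 1/2))) = 0 := by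
      linear_combination E0
    exact (mul_eq_zero.mp goal2).resolve_left fne
  have EII : ∀ m : ℕ, Q m * (mu - (lam + m + 1/2)) = 0 := by
    intro m
    have hm : Lc (-(1 : ℝ)/2) cx ((⟨cx, cx_mem⟩ : h0sub) : SF) ∈ h0sub := by
      rw [show ((⟨cx, cx_mem⟩ : h0sub) : SF) = cx from rfl, lcxx]
      exact Submodule.smul_mem _ _ cx_mem
    have E := hinv cx gxmem ⟨cx, cx_mem⟩ hm (e m 0)
    rw [show (⟨Lc (-(1 : ℝ)/2) cx ((⟨cx, cx_mem⟩ : h0sub) : SF), hm⟩ : h0sub)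
        = ⟨((1:ℝ)/2) • cx, Submodule.smul_mem _ _ cx_mem⟩ from
        Subtype.ext lcxx] at E
    rw [Lc_cx_e, A_add hform, A_smul hform, A_smul hform] at E
    have E0 := congrArg (fun z : SF => (z : ℝ → ℝ) 0) E
    simp only [lcx_at, coe_add, coe_smul, Pi.add_apply, Pi.smul_apply, smul_eq_mul] at E0
    rw [eval_A hsupp hform, eval_A hsupp hform, eval_A hsupp hform] at E0
    simp only [show ((⟨cx, cx_mem⟩ : h0sub) : SF) = cx from rfl,
      show ((⟨((1:ℝ)/2) • cx, Submodule.smul_mem _ _ cx_mem⟩ : h0sub) : SF)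
        = ((1:ℝ)/2) • cx from rfl,
      sderiv_cx, sderiv_smul, coe_cx, coe_one, coe_smul, Pi.smul_apply, id_eq,
      smul_eq_mul, mul_one, mul_zero, add_zero, zero_add] at E0
    have fne : (m.factorial : ℝ) ≠ 0 := Nat.cast_ne_zero.mpr m.factorial_ne_zero
    have goal2 : (m.factorial : ℝ) * (Q m * (mu - (lam + m + 1/2))) = 0 := by
      linear_combination E0
    exact (mul_eq_zero.mp goal2).resolve_left fne
  have EIII : ∀ m : ℕ, Q m = ((m:ℝ) + 1) * ((m:ℝ) + 2*lam) * P (m+1) := by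
    intro m
    have hm : Lc (-(1 : ℝ)/2) (cx * cx) ((⟨1, one_mem⟩ : h0sub) : SF) ∈ h0sub := by
      rw [show ((⟨1, one_mem⟩ : h0sub) : SF) = (1 : SF) from rfl, lxx1]
      exact Submodule.smul_mem _ _ cx_mem
    have E := hinv (cx * cx) gxxmem ⟨1, one_mem⟩ hm (e m 0)
    rw [show (⟨Lc (-(1 : ℝ)/2) (cx * cx) ((⟨1, one_mem⟩ : h0sub) : SF), hm⟩ : h0sub)
        = ⟨(-1 : ℝ) • cx, Submodule.smul_mem _ _ cx_mem⟩ from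
        Subtype.ext lxx1] at E
    rw [Lc_xx_e, A_add hform, A_add hform, A_smul hform, A_smul hform, A_smul hform] at E
    have E0 := congrArg (fun z : SF => (z : ℝ → ℝ) 0) E
    simp only [lxx_at, coe_add, coe_smul, Pi.add_apply, Pi.smul_apply, smul_eq_mul] at E0
    rw [eval_A hsupp hform, eval_A hsupp hform, eval_A hsupp hform,
      eval_A hsupp hform] at E0
    simp only [show ((⟨1, one_mem⟩ : h0sub) : SF) = (1 : SF) from rfl,
      show ((⟨(-1 : ℝ) • cx, Submodule.smul_mem _ _ cx_mem⟩ : h0sub) : SF)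
        = (-1 : ℝ) • cx from rfl,
      sderiv_one, sderiv_cx, sderiv_smul, smul_zero, coe_one, coe_zero, coe_cx, coe_smul,
      Pi.smul_apply, Pi.zero_apply, id_eq, smul_eq_mul, mul_one, mul_zero, add_zero,
      zero_add] at E0
    rw [Nat.factorial_succ] at E0
    push_cast at E0
    have fne : (m.factorial : ℝ) ≠ 0 := Nat.cast_ne_zero.mpr m.factorial_ne_zero
    have goal2 : (m.factorial : ℝ)
        * (Q m - ((m:ℝ) + 1) * ((m:ℝ) + 2*lam) * P (m+1)) = 0 := by
      linear_combination E0
    have := (mul_eq_zero.mp goal2).resolve_left fne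
    linarith
  have EIV : ∀ m : ℕ, ((m:ℝ) + 2*lam) * Q (m+1) = 0 := by
    intro m
    have hm : Lc (-(1 : ℝ)/2) (cx * cx) ((⟨cx, cx_mem⟩ : h0sub) : SF) ∈ h0sub := by
      rw [show ((⟨cx, cx_mem⟩ : h0sub) : SF) = cx from rfl, lxxx]
      exact Submodule.smul_mem _ _ cx_mem
    have E := hinv (cx * cx) gxxmem ⟨cx, cx_mem⟩ hm (e m 0)
    rw [show (⟨Lc (-(1 : ℝ)/2) (cx * cx) ((⟨cx, cx_mem⟩ : h0sub) : SF), hm⟩ : h0sub)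
        = ⟨(0 : ℝ) • cx, Submodule.smul_mem _ _ cx_mem⟩ from
        Subtype.ext lxxx] at E
    rw [Lc_xx_e, A_add hform, A_add hform, A_smul hform, A_smul hform, A_smul hform] at E
    have E0 := congrArg (fun z : SF => (z : ℝ → ℝ) 0) E
    simp only [lxx_at, coe_add, coe_smul, Pi.add_apply, Pi.smul_apply, smul_eq_mul] at E0
    rw [eval_A hsupp hform, eval_A hsupp hform, eval_A hsupp hform,
      eval_A hsupp hform] at E0
    simp only [show ((⟨cx, cx_mem⟩ : h0sub) : SF) = cx from rfl,
      show ((⟨(0 : ℝ) • cx, Submodule.smul_mem _ _ cx_mem⟩ : h0sub) : SF)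
        = (0 : ℝ) • cx from rfl,
      sderiv_cx, sderiv_smul, coe_one, coe_cx, coe_smul,
      Pi.smul_apply, id_eq, smul_eq_mul, mul_one, mul_zero, zero_mul, add_zero,
      zero_add] at E0
    rw [Nat.factorial_succ] at E0
    push_cast at E0
    have fne : (m.factorial : ℝ) ≠ 0 := Nat.cast_ne_zero.mpr m.factorial_ne_zero
    have hm1 : ((m:ℝ) + 1) ≠ 0 := by positivity
    have goal2 : (m.factorial : ℝ)
        * (((m:ℝ) + 1) * (((m:ℝ) + 2*lam) * Q (m+1))) = 0 := by
      rw [show Q (m+1) = ((q (m+1) : SF) : ℝ → ℝ) 0 from rfl]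
      linear_combination -E0
    exact (mul_eq_zero.mp
      ((mul_eq_zero.mp goal2).resolve_left fne)).resolve_left hm1
  -- classification
  have hkex : ∃ k, P k ≠ 0 := by
    by_contra hc
    push_neg at hc
    have hQ0 : ∀ m, Q m = 0 := fun m => by rw [EIII m, hc (m+1), mul_zero]
    apply hA
    funext h f
    show A h f = 0
    rw [hform]
    refine Finset.sum_eq_zero fun j _ => ?_
    have hpj : p j = 0 := SFext fun t => by
      rw [pconst j t, coe_zero]; exact hc j
    have hqj : q j = 0 := SFext fun t => by
      rw [qconst j t, coe_zero]; exact hQ0 j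
    rw [hpj, hqj, zero_mul, zero_mul, add_zero]
  obtain ⟨k, hk⟩ := hkex
  have hmu : mu = lam + k - 1/2 := by
    have h1 := (mul_eq_zero.mp (EI k)).resolve_left hk
    linarith
  have hPm : ∀ m, m ≠ k → P m = 0 := by
    intro m hmk
    have hco : mu - (lam + m - 1/2) = (k:ℝ) - m := by rw [hmu]; ring
    have h1 := EI m
    rw [hco] at h1
    refine (mul_eq_zero.mp h1).resolve_right ?_
    have h2 : (k:ℝ) ≠ (m:ℝ) := by exact_mod_cast (Ne.symm hmk)
    exact sub_ne_zero.mpr h2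
  have hQm : ∀ m, m + 1 ≠ k → Q m = 0 := by
    intro m hmk
    have hco : mu - (lam + m + 1/2) = (k:ℝ) - ((m:ℝ)+1) := by rw [hmu]; ring
    have h1 := EII m
    rw [hco] at h1
    refine (mul_eq_zero.mp h1).resolve_right ?_
    refine sub_ne_zero.mpr ?_
    exact_mod_cast (Ne.symm hmk)
  have hkM : k < M := by
    by_contra hkm
    refine hk ?_
    have h1 := (hsupp k (by omega)).1
    show ((p k : SF) : ℝ → ℝ) 0 = 0
    rw [h1, coe_zero]
  refine ⟨k, hmu, ?_, P k, ?_⟩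
  · rcases Nat.lt_or_ge k 2 with hk2 | hk2
    · interval_cases k <;> norm_num
    · obtain ⟨n, rfl⟩ : ∃ n, k = n + 2 := ⟨k - 2, by omega⟩
      have e4 := EIV n
      rw [EIII (n+1)] at e4
      have base : (((n:ℝ) + 2*lam) * (((n:ℝ)+1+1) * (((n:ℝ)+1)+2*lam))) * P (n+1+1) = 0 := by
        push_cast at e4 ⊢
        linear_combination e4
      have hst := (mul_eq_zero.mp base).resolve_right (by exact_mod_cast hk)
      push_cast
      rcases mul_eq_zero.mp hst with h1 | h2
      · have hz : 2*lam + ((n:ℝ)+2) - 2 = 0 := by linarith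
        rw [hz, mul_zero]
      · rcases mul_eq_zero.mp h2 with h3 | h4
        · exfalso
          have : (0:ℝ) ≤ (n:ℝ) := Nat.cast_nonneg n
          linarith
        · have hz : 2*lam + ((n:ℝ)+2) - 1 = 0 := by linarith
          rw [hz, mul_zero, zero_mul]
  · intro h f
    rw [hform]
    have step : ∀ j ∈ range M,
        p j * (h.1 * sderiv^[j] f) + q j * (sderiv h.1 * sderiv^[j] f)
          = P j • (h.1 * sderiv^[j] f) + Q j • (sderiv h.1 * sderiv^[j] f) := by
      intro j _
      have hpj : p j = P j • (1 : SF) := SFext fun t => by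
        rw [pconst j t]; simp; rfl
      have hqj : q j = Q j • (1 : SF) := SFext fun t => by
        rw [qconst j t]; simp; rfl
      rw [hpj, hqj]
      simp only [Algebra.smul_def]
      ring
    rw [Finset.sum_congr rfl step, Finset.sum_add_distrib]
    have sum1 : ∑ j ∈ range M, P j • (h.1 * sderiv^[j] f)
        = P k • (h.1 * sderiv^[k] f) := by
      refine Finset.sum_eq_single_of_mem k (mem_range.mpr hkM) fun j _ hj => ?_
      rw [hPm j hj, zero_smul]
    rw [sum1]
    rcases Nat.eq_zero_or_pos k with hk0 | hkpos
    · subst hk0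
      have sum2 : ∑ j ∈ range M, Q j • (sderiv h.1 * sderiv^[j] f) = 0 :=
        Finset.sum_eq_zero fun j _ => by rw [hQm j (by omega), zero_smul]
      rw [sum2]
      simp only [Nat.cast_zero, zero_mul, zero_smul, add_zero]
    · have sum2 : ∑ j ∈ range M, Q j • (sderiv h.1 * sderiv^[j] f)
          = Q (k-1) • (sderiv h.1 * sderiv^[k-1] f) := by
        refine Finset.sum_eq_single_of_mem (k-1) (mem_range.mpr (by omega)) fun j _ hj => ?_
        rw [hQm j (by omega), zero_smul]
      rw [sum2]
      have hQK : Q (k-1) = P k * ((k:ℝ) * (2*lam + (k:ℝ) - 1)) := by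
        have h1 := EIII (k-1)
        have hk1 : k - 1 + 1 = k := by omega
        rw [hk1] at h1
        have hc1 : ((k-1 : ℕ):ℝ) = (k:ℝ) - 1 := by
          push_cast [Nat.cast_sub (by omega : 1 ≤ k)]
          ring
        rw [h1, hc1]
        ring
      rw [smul_add, smul_smul, hQK]
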